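/- Let (U,Θ,ρ) be a probability space, N ∈ ℕ, Σ a symmetric positive definite N×N real matrix, and let G : U → ℝ^N be a measurable map for which there is a measurable function W : U → [0,∞) with ∫_U (1 + W(z))² dρ(z) < ∞ and |G(z)| ≤ W(z) for ρ-almost every z. For δ ∈ ℝ^N define Φ(z,δ) = (1/2)⟨Σ^{-1}(δ − G(z)), δ − G(z)⟩, Z(δ) = ∫_U exp(−Φ(z,δ)) dρ(z), and let μ^δ be the probability measure with density dμ^δ/dρ = exp(−Φ(·,δ))/Z(δ). Then Z(δ) > 0 for every δ, and for every r > 0 there is a constant c(r), depending only on r, Σ and ∫(1+W)² dρ, such that for all δ, δ' ∈ ℝ^N with |δ| ≤ r and |δ'| ≤ r, d_Hell(μ^δ, μ^{δ'}) ≤ c(r) |δ − δ'|. -/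

import Mathlib

open MeasureTheory Real Filter Matrix

/-- Euclidean norm on `ℝ^N`. -/
noncomputable def euclNorm {N : ℕ} (v : Fin N → ℝ) : ℝ := Real.sqrt (v ⬝ᵥ v)

/-- Least-squares potential `Φ(z) = ½ ⟨Σ⁻¹(δ - G z), δ - G z⟩`. -/
noncomputable def potential {U : Type*} {N : ℕ} (S : Matrix (Fin N) (Fin N) ℝ)
    (δ : Fin N → ℝ) (G : U → Fin N → ℝ) (z : U) : ℝ :=
  1 / 2 * ((S⁻¹).mulVec (δ - G z) ⬝ᵥ (δ - G z))

/-- Hellinger distance between two measures, absolutely continuous with respect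
to `ρ`, given by their densities `f, g`. -/
noncomputable def hellingerDist {U : Type*} [MeasurableSpace U] (ρ : Measure U)
    (f g : U → ℝ) : ℝ :=
  Real.sqrt (1 / 2 * ∫ z, (Real.sqrt (f z) - Real.sqrt (g z)) ^ 2 ∂ρ)

/-- Gibbs density `exp(-Φ)/Z` with `Z = ∫ exp(-Φ) dρ`. -/
noncomputable def gibbsDensity {U : Type*} [MeasurableSpace U] (ρ : Measure U)
    (Φ : U → ℝ) (z : U) : ℝ :=
  Real.exp (-Φ z) / ∫ w, Real.exp (-Φ w) ∂ρ

/- ## Auxiliary lemmas -/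

lemma euclNorm_nonneg {N : ℕ} (v : Fin N → ℝ) : 0 ≤ euclNorm v := Real.sqrt_nonneg _

lemma euclNorm_eq {N : ℕ} (v : Fin N → ℝ) :
    euclNorm v = ‖(WithLp.equiv 2 (Fin N → ℝ)).symm v‖ := by
  rw [EuclideanSpace.norm_eq]
  unfold euclNorm dotProduct
  congr 1
  refine Finset.sum_congr rfl fun i _ => ?_
  simp [Real.norm_eq_abs, sq_abs, sq]

lemma abs_coord_le {N : ℕ} (v : Fin N → ℝ) (i : Fin N) : |v i| ≤ euclNorm v := by
  rw [← Real.sqrt_mul_self_eq_abs]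
  apply Real.sqrt_le_sqrt
  exact Finset.single_le_sum (f := fun j => v j * v j) (fun j _ => mul_self_nonneg _)
    (Finset.mem_univ i)

lemma euclNorm_sub_le {N : ℕ} (a b : Fin N → ℝ) :
    euclNorm (a - b) ≤ euclNorm a + euclNorm b := by
  rw [euclNorm_eq, euclNorm_eq, euclNorm_eq]
  have : (WithLp.equiv 2 (Fin N → ℝ)).symm (a - b)
      = (WithLp.equiv 2 (Fin N → ℝ)).symm a - (WithLp.equiv 2 (Fin N → ℝ)).symm b := rfl
  rw [this]
  exact norm_sub_le _ _

lemma bilin_bound {N : ℕ} (A : Matrix (Fin N) (Fin N) ℝ) (v w : Fin N → ℝ) :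
    |A.mulVec v ⬝ᵥ w| ≤ (∑ i, ∑ j, |A i j|) * euclNorm v * euclNorm w := by
  have h1 : A.mulVec v ⬝ᵥ w = ∑ i, ∑ j, A i j * v j * w i := by
    simp [Matrix.mulVec, dotProduct, Finset.sum_mul]
  rw [h1, mul_assoc]
  calc |∑ i, ∑ j, A i j * v j * w i| ≤ ∑ i, ∑ j, |A i j * v j * w i| :=
        (Finset.abs_sum_le_sum_abs _ _).trans
          (Finset.sum_le_sum fun i _ => Finset.abs_sum_le_sum_abs _ _)
    _ ≤ ∑ i, ∑ j, |A i j| * (euclNorm v * euclNorm w) := by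
        refine Finset.sum_le_sum fun i _ => Finset.sum_le_sum fun j _ => ?_
        rw [abs_mul, abs_mul, mul_assoc]
        have hv := abs_coord_le v j
        have hw := abs_coord_le w i
        exact mul_le_mul_of_nonneg_left
          (mul_le_mul hv hw (abs_nonneg _) (euclNorm_nonneg _)) (abs_nonneg _)
    _ = (∑ i, ∑ j, |A i j|) * (euclNorm v * euclNorm w) := by
        simp [Finset.sum_mul]

lemma exp_neg_lip {a b : ℝ} (ha : 0 ≤ a) (hb : 0 ≤ b) :
    |Real.exp (-a) - Real.exp (-b)| ≤ |a - b| := by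
  wlog h : b ≤ a generalizing a b
  · rw [abs_sub_comm, abs_sub_comm a b]; exact this hb ha (le_of_not_ge h)
  have hle : Real.exp (-a) ≤ Real.exp (-b) := Real.exp_le_exp.2 (by linarith)
  rw [abs_of_nonpos (by linarith), abs_of_nonneg (by linarith)]
  have key : Real.exp (-b) - Real.exp (-a) ≤ a - b := by
    have h1 : Real.exp (-a) = Real.exp (-b) * Real.exp (-(a - b)) := by
      rw [← Real.exp_add]; ring_nf
    have h2 : 1 - Real.exp (-(a-b)) ≤ a - b := by
      have := Real.add_one_le_exp (-(a-b)); linarith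
    have h3 : Real.exp (-b) ≤ 1 := Real.exp_le_one_iff.2 (by linarith)
    have h4 : 0 ≤ 1 - Real.exp (-(a-b)) := by
      have : Real.exp (-(a-b)) ≤ 1 := Real.exp_le_one_iff.2 (by linarith)
      linarith
    calc Real.exp (-b) - Real.exp (-a) = Real.exp (-b) * (1 - Real.exp (-(a-b))) := by
          rw [h1]; ring
      _ ≤ 1 * (a - b) := mul_le_mul h3 h2 h4 one_pos.le
      _ = a - b := one_mul _
  linarith

lemma exp_neg_half_lip {a b : ℝ} (ha : 0 ≤ a) (hb : 0 ≤ b) :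
    |Real.exp (-a / 2) - Real.exp (-b / 2)| ≤ |a - b| / 2 := by
  have h0 : (-a) / 2 = -(a/2) := by ring
  have h0' : (-b) / 2 = -(b/2) := by ring
  rw [h0, h0']
  calc |Real.exp (-(a/2)) - Real.exp (-(b/2))| ≤ |a/2 - b/2| :=
        exp_neg_lip (by linarith) (by linarith)
    _ = |a - b| / 2 := by
        rw [show a/2 - b/2 = (a-b)/2 by ring, abs_div, abs_two]

lemma bilin_polar {N : ℕ} (M : Matrix (Fin N) (Fin N) ℝ) (u u' : Fin N → ℝ) :
    M.mulVec u ⬝ᵥ u - M.mulVec u' ⬝ᵥ u'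
      = M.mulVec (u - u') ⬝ᵥ u + M.mulVec u' ⬝ᵥ (u - u') := by
  rw [Matrix.mulVec_sub, sub_dotProduct, dotProduct_sub]; ring

lemma pot_diff {U : Type*} {N : ℕ} (S : Matrix (Fin N) (Fin N) ℝ)
    (δ δ' : Fin N → ℝ) (G : U → Fin N → ℝ) (z : U) :
    potential S δ G z - potential S δ' G z
      = 1/2 * ((S⁻¹).mulVec (δ - δ') ⬝ᵥ (δ - G z) + (S⁻¹).mulVec (δ' - G z) ⬝ᵥ (δ - δ')) := by
  unfold potential
  have h1 : (δ : Fin N → ℝ) - δ' = (δ - G z) - (δ' - G z) :=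
    (sub_sub_sub_cancel_right δ δ' (G z)).symm
  rw [h1, ← bilin_polar]
  ring

lemma potential_nonneg {U : Type*} {N : ℕ} {S : Matrix (Fin N) (Fin N) ℝ} (hS : S.PosDef)
    (δ : Fin N → ℝ) (G : U → Fin N → ℝ) (z : U) : 0 ≤ potential S δ G z := by
  have hinv : (S⁻¹).PosSemidef := hS.inv.posSemidef
  have h := hinv.re_dotProduct_nonneg (δ - G z)
  simp only [RCLike.re_to_real, star_trivial] at h
  unfold potential
  rw [dotProduct_comm]
  linarith

lemma potential_meas {U : Type*} [MeasurableSpace U] {N : ℕ} (S : Matrix (Fin N) (Fin N) ℝ)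
    (δ : Fin N → ℝ) {G : U → Fin N → ℝ} (hG : Measurable G) :
    Measurable (fun z => potential S δ G z) := by
  have hGj : ∀ j, Measurable fun z => G z j := fun j => (measurable_pi_apply j).comp hG
  unfold potential
  simp only [Matrix.mulVec, dotProduct, Pi.sub_apply]
  apply Measurable.const_mul
  apply Finset.measurable_sum
  intro i _
  apply Measurable.mul
  · apply Finset.measurable_sum; intro j _
    exact (measurable_const.sub (hGj j)).const_mul _
  · exact measurable_const.sub (hGj i)

lemma int_exp_pot {U : Type*} [MeasurableSpace U] {ρ : Measure U} [IsProbabilityMeasure ρ]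
    {N : ℕ} {S : Matrix (Fin N) (Fin N) ℝ} (hS : S.PosDef)
    (δ : Fin N → ℝ) {G : U → Fin N → ℝ} (hG : Measurable G) :
    Integrable (fun z => Real.exp (-(potential S δ G z))) ρ := by
  apply (integrable_const (1:ℝ)).mono'
  · exact ((potential_meas S δ hG).neg.exp).aestronglyMeasurable
  · filter_upwards with z
    rw [Real.norm_eq_abs, abs_of_pos (Real.exp_pos _)]
    exact Real.exp_le_one_iff.2 (neg_nonpos.2 (potential_nonneg hS δ G z))

lemma Z_pos {U : Type*} [MeasurableSpace U] {ρ : Measure U} [IsProbabilityMeasure ρ]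
    {N : ℕ} {S : Matrix (Fin N) (Fin N) ℝ} (hS : S.PosDef)
    (δ : Fin N → ℝ) {G : U → Fin N → ℝ} (hG : Measurable G) :
    0 < ∫ w, Real.exp (-(potential S δ G w)) ∂ρ :=
  integral_exp_pos (int_exp_pot hS δ hG)

set_option maxHeartbeats 2000000 in
/-- Well-posedness (positivity of the normalizing constant and local Lipschitz
continuity in the data `δ`, in the Hellinger distance) of the Bayesian
posterior for a forward map dominated by a square-integrable envelope
(Gaussian-prior setting). -/
theorem posterior_locally_lipschitz_envelope
    {U : Type*} [MeasurableSpace U] (ρ : Measure U) [IsProbabilityMeasure ρ]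
    {N : ℕ} (S : Matrix (Fin N) (Fin N) ℝ) (hS : S.PosDef)
    (G : U → Fin N → ℝ) (hGmeas : Measurable G)
    (W : U → ℝ) (hWmeas : Measurable W) (hWnn : ∀ z, 0 ≤ W z)
    (hWint : Integrable (fun z => (1 + W z) ^ 2) ρ)
    (hbound : ∀ᵐ z ∂ρ, euclNorm (G z) ≤ W z) :
    (∀ δ : Fin N → ℝ, 0 < ∫ w, Real.exp (-(potential S δ G w)) ∂ρ) ∧
    ∀ r > 0, ∃ c : ℝ, ∀ δ δ' : Fin N → ℝ, euclNorm δ ≤ r → euclNorm δ' ≤ r →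
      hellingerDist ρ (gibbsDensity ρ (potential S δ G))
          (gibbsDensity ρ (potential S δ' G))
        ≤ c * euclNorm (δ - δ') := by
  refine ⟨fun δ => Z_pos hS δ hGmeas, ?_⟩
  intro r hr
  set K := ∑ i, ∑ j, |(S⁻¹) i j| with hKdef
  have hK0 : 0 ≤ K := Finset.sum_nonneg fun i _ => Finset.sum_nonneg fun j _ => abs_nonneg _
  set B : U → ℝ := fun z => (1 + r) * (1 + W z) with hBdef
  have hB1 : ∀ z, 1 ≤ B z := fun z => by
    have := hWnn z; simp only [hBdef]; nlinarith
  have hB0 : ∀ z, 0 ≤ B z := fun z => le_trans zero_le_one (hB1 z)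
  have hBmeas : Measurable B := (measurable_const.add hWmeas).const_mul _
  have hB2int : Integrable (fun z => B z ^ 2) ρ := by
    have h : (fun z => B z ^ 2) = fun z => (1+r)^2 * (1 + W z)^2 := by
      funext z; simp only [hBdef]; ring
    rw [h]; exact hWint.const_mul _
  have hBint : Integrable B ρ := by
    apply hB2int.mono' hBmeas.aestronglyMeasurable
    filter_upwards with z
    rw [Real.norm_eq_abs, abs_of_nonneg (hB0 z)]
    nlinarith [hB1 z]
  set IB := ∫ z, B z ∂ρ with hIBdef
  set IB2 := ∫ z, B z ^ 2 ∂ρ with hIB2def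
  have hIBnn : 0 ≤ IB := integral_nonneg hB0
  have hIB2nn : 0 ≤ IB2 := integral_nonneg fun z => sq_nonneg _
  -- uniform lower bound on the normalizing constant
  set z₀ := ∫ z, Real.exp (-(K/2 * B z ^ 2)) ∂ρ with hz₀def
  have hexpB_int : Integrable (fun z => Real.exp (-(K/2 * B z ^ 2))) ρ := by
    apply (integrable_const (1:ℝ)).mono'
    · exact (((hBmeas.pow_const 2).const_mul _).neg.exp).aestronglyMeasurable
    · filter_upwards with z
      rw [Real.norm_eq_abs, abs_of_pos (Real.exp_pos _)]
      apply Real.exp_le_one_iff.2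
      have h : 0 ≤ K/2 * B z ^ 2 := by positivity
      linarith
  have hz₀pos : 0 < z₀ := integral_exp_pos hexpB_int
  set s₀ := Real.sqrt z₀ with hs₀def
  have hs₀pos : 0 < s₀ := Real.sqrt_pos.2 hz₀pos
  have hs₀sq : s₀ ^ 2 = z₀ := Real.sq_sqrt hz₀pos.le
  -- norm estimate
  have hnormle : ∀ δ : Fin N → ℝ, euclNorm δ ≤ r → ∀ z, euclNorm (G z) ≤ W z →
      euclNorm (δ - G z) ≤ B z := by
    intro δ hδ z hz
    have h1 := euclNorm_sub_le δ (G z)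
    have hW := hWnn z
    simp only [hBdef]
    nlinarith
  -- a.e. upper bound on the potential
  have hpotle : ∀ δ : Fin N → ℝ, euclNorm δ ≤ r →
      ∀ᵐ z ∂ρ, potential S δ G z ≤ K/2 * B z ^ 2 := by
    intro δ hδ
    filter_upwards [hbound] with z hz
    have h1 := bilin_bound S⁻¹ (δ - G z) (δ - G z)
    rw [← hKdef] at h1
    have h2 := hnormle δ hδ z hz
    have hn := euclNorm_nonneg (δ - G z)
    have h3 : K * euclNorm (δ - G z) * euclNorm (δ - G z) ≤ K * B z * B z := by
      rw [mul_assoc, mul_assoc]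
      exact mul_le_mul_of_nonneg_left (mul_le_mul h2 h2 hn (hB0 z)) hK0
    have h4 := (abs_le.1 h1).2
    unfold potential
    nlinarith [h3, h4]
  have hZge : ∀ δ : Fin N → ℝ, euclNorm δ ≤ r →
      z₀ ≤ ∫ w, Real.exp (-(potential S δ G w)) ∂ρ := by
    intro δ hδ
    apply integral_mono_ae hexpB_int (int_exp_pot hS δ hGmeas)
    filter_upwards [hpotle δ hδ] with z hz
    exact Real.exp_le_exp.2 (by linarith)
  -- a.e. Lipschitz bound on the potential difference
  have hdiff : ∀ δ δ' : Fin N → ℝ, euclNorm δ ≤ r → euclNorm δ' ≤ r →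
      ∀ᵐ z ∂ρ, |potential S δ G z - potential S δ' G z|
        ≤ K * B z * euclNorm (δ - δ') := by
    intro δ δ' hδ hδ'
    filter_upwards [hbound] with z hz
    rw [pot_diff]
    have hd0 : 0 ≤ euclNorm (δ - δ') := euclNorm_nonneg _
    have e1 := bilin_bound S⁻¹ (δ - δ') (δ - G z)
    have e2 := bilin_bound S⁻¹ (δ' - G z) (δ - δ')
    rw [← hKdef] at e1 e2
    have h2 := hnormle δ hδ z hz
    have h2' := hnormle δ' hδ' z hz
    have f1 : |(S⁻¹).mulVec (δ - δ') ⬝ᵥ (δ - G z)| ≤ K * B z * euclNorm (δ - δ') := by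
      refine e1.trans ?_
      calc K * euclNorm (δ - δ') * euclNorm (δ - G z)
          ≤ K * euclNorm (δ - δ') * B z :=
            mul_le_mul_of_nonneg_left h2 (by positivity)
        _ = K * B z * euclNorm (δ - δ') := by ring
    have f2 : |(S⁻¹).mulVec (δ' - G z) ⬝ᵥ (δ - δ')| ≤ K * B z * euclNorm (δ - δ') := by
      refine e2.trans ?_
      exact mul_le_mul_of_nonneg_right (mul_le_mul_of_nonneg_left h2' hK0) hd0
    rw [abs_mul, abs_of_pos (by norm_num : (0:ℝ) < 1/2)]
    calc 1/2 * |(S⁻¹).mulVec (δ - δ') ⬝ᵥ (δ - G z) + (S⁻¹).mulVec (δ' - G z) ⬝ᵥ (δ - δ')|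
        ≤ 1/2 * (|(S⁻¹).mulVec (δ - δ') ⬝ᵥ (δ - G z)| + |(S⁻¹).mulVec (δ' - G z) ⬝ᵥ (δ - δ')|) := by
          have := abs_add_le ((S⁻¹).mulVec (δ - δ') ⬝ᵥ (δ - G z)) ((S⁻¹).mulVec (δ' - G z) ⬝ᵥ (δ - δ'))
          linarith
      _ ≤ K * B z * euclNorm (δ - δ') := by linarith
  -- the constant
  refine ⟨Real.sqrt (K^2*IB2/(4*z₀) + K^2*IB^2/(4*z₀^3)), ?_⟩
  intro δ δ' hδ hδ'
  set d := euclNorm (δ - δ') with hddef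
  have hd0 : 0 ≤ d := euclNorm_nonneg _
  set Φ := potential S δ G with hΦdef
  set Φ' := potential S δ' G with hΦ'def
  have hΦnn : ∀ z, 0 ≤ Φ z := potential_nonneg hS δ G
  have hΦ'nn : ∀ z, 0 ≤ Φ' z := potential_nonneg hS δ' G
  have hΦmeas : Measurable Φ := potential_meas S δ hGmeas
  have hΦ'meas : Measurable Φ' := potential_meas S δ' hGmeas
  have hint : Integrable (fun z => Real.exp (-(Φ z))) ρ := int_exp_pot hS δ hGmeas
  have hint' : Integrable (fun z => Real.exp (-(Φ' z))) ρ := int_exp_pot hS δ' hGmeas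
  set Z := ∫ w, Real.exp (-(Φ w)) ∂ρ with hZdef
  set Z' := ∫ w, Real.exp (-(Φ' w)) ∂ρ with hZ'def
  have hZlb : z₀ ≤ Z := hZge δ hδ
  have hZlb' : z₀ ≤ Z' := hZge δ' hδ'
  have hZpos : 0 < Z := lt_of_lt_of_le hz₀pos hZlb
  have hZ'pos : 0 < Z' := lt_of_lt_of_le hz₀pos hZlb'
  have hZ'le1 : Z' ≤ 1 := by
    have h := integral_mono_ae hint' (integrable_const (1:ℝ))
      (ae_of_all _ fun z => Real.exp_le_one_iff.2 (neg_nonpos.2 (hΦ'nn z)))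
    simpa using h
  set g : U → ℝ := fun z => Real.exp (-Φ z / 2) with hgdef
  set g' : U → ℝ := fun z => Real.exp (-Φ' z / 2) with hg'def
  have hg_meas : Measurable g := (hΦmeas.neg.div_const 2).exp
  have hg'_meas : Measurable g' := (hΦ'meas.neg.div_const 2).exp
  set sZ := Real.sqrt Z with hsZdef
  set sZ' := Real.sqrt Z' with hsZ'def
  have hsZpos : 0 < sZ := Real.sqrt_pos.2 hZpos
  have hsZ'pos : 0 < sZ' := Real.sqrt_pos.2 hZ'pos
  have hsZlb : s₀ ≤ sZ := Real.sqrt_le_sqrt hZlb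
  have hsZlb' : s₀ ≤ sZ' := Real.sqrt_le_sqrt hZlb'
  have hsZsq : sZ ^ 2 = Z := Real.sq_sqrt hZpos.le
  have hsZ'sq : sZ' ^ 2 = Z' := Real.sq_sqrt hZ'pos.le
  have hsqrt : ∀ z, Real.sqrt (gibbsDensity ρ Φ z) = g z / sZ := by
    intro z
    unfold gibbsDensity
    rw [← hZdef, Real.sqrt_div (Real.exp_nonneg _), ← Real.exp_half]
  have hsqrt' : ∀ z, Real.sqrt (gibbsDensity ρ Φ' z) = g' z / sZ' := by
    intro z
    unfold gibbsDensity
    rw [← hZ'def, Real.sqrt_div (Real.exp_nonneg _), ← Real.exp_half]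
  -- bound on |g - g'|
  have hgdiff : ∀ᵐ z ∂ρ, |g z - g' z| ≤ K * B z * d / 2 := by
    filter_upwards [hdiff δ δ' hδ hδ'] with z hz
    calc |g z - g' z| ≤ |Φ z - Φ' z| / 2 := exp_neg_half_lip (hΦnn z) (hΦ'nn z)
      _ ≤ K * B z * d / 2 := by linarith
  -- integral of (g-g')^2
  have hgsq_bound : ∀ᵐ z ∂ρ, (g z - g' z)^2 ≤ (K*d/2)^2 * B z ^ 2 := by
    filter_upwards [hgdiff] with z hz
    have h1 : |g z - g' z|^2 ≤ (K * B z * d / 2)^2 :=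
      pow_le_pow_left₀ (abs_nonneg _) hz 2
    rw [sq_abs] at h1
    calc (g z - g' z)^2 ≤ (K * B z * d / 2)^2 := h1
      _ = (K*d/2)^2 * B z ^ 2 := by ring
  have hIg_int : Integrable (fun z => (g z - g' z)^2) ρ := by
    apply Integrable.mono' (hB2int.const_mul ((K*d/2)^2))
      (((hg_meas.sub hg'_meas).pow_const 2).aestronglyMeasurable)
    filter_upwards [hgsq_bound] with z hz
    rw [Real.norm_eq_abs, abs_of_nonneg (sq_nonneg _)]
    exact hz
  set Ig := ∫ z, (g z - g' z)^2 ∂ρ with hIgdef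
  have hIg_nn : 0 ≤ Ig := integral_nonneg fun z => sq_nonneg _
  have hIg_le : Ig ≤ (K*d/2)^2 * IB2 := by
    have h := integral_mono_ae hIg_int (hB2int.const_mul ((K*d/2)^2)) hgsq_bound
    rwa [integral_const_mul] at h
  -- bound on |Z - Z'|
  have hZZ' : |Z - Z'| ≤ K * IB * d := by
    have hsub : Z - Z' = ∫ z, (Real.exp (-(Φ z)) - Real.exp (-(Φ' z))) ∂ρ :=
      (integral_sub hint hint').symm
    rw [hsub]
    have h1 : |∫ z, (Real.exp (-(Φ z)) - Real.exp (-(Φ' z))) ∂ρ|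
        ≤ ∫ z, |Real.exp (-(Φ z)) - Real.exp (-(Φ' z))| ∂ρ := by
      simpa [Real.norm_eq_abs] using
        norm_integral_le_integral_norm (μ := ρ)
          (fun z => Real.exp (-(Φ z)) - Real.exp (-(Φ' z)))
    have h2 : ∫ z, |Real.exp (-(Φ z)) - Real.exp (-(Φ' z))| ∂ρ
        ≤ ∫ z, (K*d) * B z ∂ρ := by
      apply integral_mono_ae ((hint.sub hint').abs) (hBint.const_mul (K*d))
      filter_upwards [hdiff δ δ' hδ hδ'] with z hz
      calc |Real.exp (-(Φ z)) - Real.exp (-(Φ' z))| ≤ |Φ z - Φ' z| :=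
            exp_neg_lip (hΦnn z) (hΦ'nn z)
        _ ≤ K * B z * d := hz
        _ = (K*d) * B z := by ring
    rw [integral_const_mul] at h2
    calc |∫ z, Real.exp (-(Φ z)) - Real.exp (-(Φ' z)) ∂ρ|
        ≤ ∫ z, |Real.exp (-(Φ z)) - Real.exp (-(Φ' z))| ∂ρ := h1
      _ ≤ (K*d) * IB := h2
      _ = K * IB * d := by ring
  -- bound on |sZ - sZ'|
  have hsZdiff : |sZ - sZ'| ≤ K * IB * d / (2 * s₀) := by
    have hfact : Z - Z' = (sZ - sZ') * (sZ + sZ') := by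
      rw [← hsZsq, ← hsZ'sq]; ring
    have hpos : 0 < sZ + sZ' := by linarith
    have habs : |Z - Z'| = |sZ - sZ'| * (sZ + sZ') := by
      rw [hfact, abs_mul, abs_of_pos hpos]
    rw [le_div_iff₀ (by positivity : (0:ℝ) < 2 * s₀)]
    calc |sZ - sZ'| * (2 * s₀) ≤ |sZ - sZ'| * (sZ + sZ') := by
          apply mul_le_mul_of_nonneg_left ?_ (abs_nonneg _)
          linarith
      _ = |Z - Z'| := habs.symm
      _ ≤ K * IB * d := hZZ'
  set t := 1/sZ - 1/sZ' with htdef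
  have ht : |t| ≤ K * IB * d / (2 * s₀ * z₀) := by
    have he : t = (sZ' - sZ)/(sZ * sZ') := by
      rw [htdef]; field_simp
    have hmm : z₀ ≤ sZ * sZ' := by
      calc z₀ = s₀ * s₀ := by rw [← hs₀sq]; ring
        _ ≤ sZ * sZ' := mul_le_mul hsZlb hsZlb' hs₀pos.le hsZpos.le
    rw [he, abs_div, abs_of_pos (mul_pos hsZpos hsZ'pos), abs_sub_comm]
    calc |sZ - sZ'| / (sZ * sZ') ≤ (K * IB * d / (2 * s₀)) / z₀ :=
          div_le_div₀ (div_nonneg (mul_nonneg (mul_nonneg hK0 hIBnn) hd0)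
            (by linarith : (0:ℝ) ≤ 2 * s₀)) hsZdiff hz₀pos hmm
      _ = K * IB * d / (2 * s₀ * z₀) := by rw [div_div]
  -- g'^2 integrates to Z'
  have hg'sq : ∀ z, g' z ^ 2 = Real.exp (-(Φ' z)) := fun z => by
    rw [hg'def]
    rw [sq, ← Real.exp_add]
    ring_nf
  have hIg'2int : Integrable (fun z => g' z ^ 2) ρ := by
    have h : (fun z => g' z ^ 2) = fun z => Real.exp (-(Φ' z)) := funext hg'sq
    rw [h]; exact hint'
  have hIg'2 : ∫ z, g' z ^ 2 ∂ρ = Z' := by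
    rw [funext hg'sq, hZ'def]
  -- pointwise bound on the Hellinger integrand
  have hmain : ∀ᵐ z ∂ρ, (g z / sZ - g' z / sZ')^2
      ≤ 2*((1/Z)*(g z - g' z)^2 + t^2 * g' z ^ 2) := by
    filter_upwards with z
    have hx : g z / sZ - g' z / sZ' = (g z - g' z) * (1/sZ) + g' z * t := by
      rw [htdef]; field_simp; ring
    rw [hx]
    have h1 : ((g z - g' z) * (1/sZ) + g' z * t)^2
        ≤ 2*((g z - g' z) * (1/sZ))^2 + 2*(g' z * t)^2 := by
      have h0 := two_mul_le_add_sq ((g z - g' z) * (1/sZ)) (g' z * t)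
      calc ((g z - g' z) * (1/sZ) + g' z * t)^2
          = ((g z - g' z) * (1/sZ))^2 + 2 * ((g z - g' z) * (1/sZ)) * (g' z * t)
            + (g' z * t)^2 := by ring
        _ ≤ 2*((g z - g' z) * (1/sZ))^2 + 2*(g' z * t)^2 := by linarith
    have h2 : ((g z - g' z) * (1/sZ))^2 = (1/Z) * (g z - g' z)^2 := by
      rw [mul_pow, ← hsZsq]
      field_simp
    have h3 : (g' z * t)^2 = t^2 * g' z ^ 2 := by ring
    rw [h2, h3] at h1
    linarith
  -- integrability of the Hellinger integrand
  have hR_int : Integrable (fun z => 2*((1/Z)*(g z - g' z)^2 + t^2 * g' z ^ 2)) ρ :=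
    ((hIg_int.const_mul (1/Z)).add (hIg'2int.const_mul (t^2))).const_mul 2
  have hL_meas : Measurable (fun z => (g z / sZ - g' z / sZ')^2) :=
    (((hg_meas.div_const sZ).sub (hg'_meas.div_const sZ')).pow_const 2)
  have hL_int : Integrable (fun z => (g z / sZ - g' z / sZ')^2) ρ := by
    apply Integrable.mono' hR_int hL_meas.aestronglyMeasurable
    filter_upwards [hmain] with z hz
    rw [Real.norm_eq_abs, abs_of_nonneg (sq_nonneg _)]
    exact hz
  have hInt_le : ∫ z, (g z / sZ - g' z / sZ')^2 ∂ρ ≤ 2*((1/Z)*Ig + t^2*Z') := by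
    have h := integral_mono_ae hL_int hR_int hmain
    rw [integral_const_mul, integral_add (hIg_int.const_mul (1/Z)) (hIg'2int.const_mul (t^2)),
      integral_const_mul, integral_const_mul, hIg'2] at h
    exact h
  -- numeric endgame
  have hIL_nn : 0 ≤ ∫ z, (g z / sZ - g' z / sZ')^2 ∂ρ := integral_nonneg fun z => sq_nonneg _
  have e1 : (1/Z)*Ig ≤ (1/z₀)*((K*d/2)^2*IB2) :=
    mul_le_mul (one_div_le_one_div_of_le hz₀pos hZlb) hIg_le hIg_nn (by positivity)
  have e2 : t^2*Z' ≤ (K*IB*d/(2*s₀*z₀))^2 := by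
    have h1 : t^2 ≤ (K*IB*d/(2*s₀*z₀))^2 := by
      rw [← sq_abs t]; exact pow_le_pow_left₀ (abs_nonneg t) ht 2
    have h2 : t^2*Z' ≤ t^2 := mul_le_of_le_one_right (sq_nonneg t) hZ'le1
    exact h2.trans h1
  have e3 : (1/z₀)*((K*d/2)^2*IB2) = K^2*IB2/(4*z₀) * d^2 := by
    field_simp; ring
  have e4 : (K*IB*d/(2*s₀*z₀))^2 = K^2*IB^2/(4*z₀^3) * d^2 := by
    rw [div_pow, show (2*s₀*z₀)^2 = 4*s₀^2*z₀^2 by ring, hs₀sq]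
    field_simp
  have hcore : (1/Z)*Ig + t^2*Z' ≤ (K^2*IB2/(4*z₀) + K^2*IB^2/(4*z₀^3)) * d^2 := by
    have e1' : (1/Z)*Ig ≤ K^2*IB2/(4*z₀) * d^2 := le_trans e1 (le_of_eq e3)
    have e2' : t^2*Z' ≤ K^2*IB^2/(4*z₀^3) * d^2 := le_trans e2 (le_of_eq e4)
    rw [add_mul]
    linarith
  have hC2nn : 0 ≤ K^2*IB2/(4*z₀) + K^2*IB^2/(4*z₀^3) := by
    have h1 : 0 ≤ K^2*IB2/(4*z₀) := div_nonneg (by positivity) (by linarith)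
    have h2 : 0 ≤ K^2*IB^2/(4*z₀^3) := div_nonneg (by positivity) (by positivity)
    linarith
  -- conclude
  unfold hellingerDist
  have hint_eq : ∫ z, (Real.sqrt (gibbsDensity ρ Φ z) - Real.sqrt (gibbsDensity ρ Φ' z))^2 ∂ρ
      = ∫ z, (g z / sZ - g' z / sZ')^2 ∂ρ := by
    refine integral_congr_ae (ae_of_all _ fun z => ?_)
    show (Real.sqrt (gibbsDensity ρ Φ z) - Real.sqrt (gibbsDensity ρ Φ' z))^2
      = (g z / sZ - g' z / sZ')^2
    rw [hsqrt z, hsqrt' z]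
  rw [hint_eq]
  calc Real.sqrt (1/2 * ∫ z, (g z / sZ - g' z / sZ')^2 ∂ρ)
      ≤ Real.sqrt ((K^2*IB2/(4*z₀) + K^2*IB^2/(4*z₀^3)) * d^2) := by
        apply Real.sqrt_le_sqrt
        linarith [hInt_le, hcore]
    _ = Real.sqrt (K^2*IB2/(4*z₀) + K^2*IB^2/(4*z₀^3)) * d := by
        rw [Real.sqrt_mul hC2nn, Real.sqrt_sq hd0]
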